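/- Let ρ ∈ [0,1] and let Σ₁₂, Σ₁₃, Σ₂₃ be the 2×2 correlation matrices with off-diagonal entries −ρ, ρ, ρ respectively. There exists a 3×3 symmetric positive semi-definite matrix Σ with unit diagonal whose three 2×2 principal submatrices (on index pairs {1,2}, {1,3}, {2,3}) equal Σ₁₂, Σ₁₃, Σ₂₃ if and only if ρ ≤ 1/2. -/

import Mathlib

/-- For `ρ ∈ [0,1]`, the three `2×2` correlation matrices with off-diagonal entries
`−ρ, ρ, ρ` admit a common completion to a `3×3` correlation matrix if and only if
`ρ ≤ 1/2`. -/
theorem stmt5 (ρ : ℝ) (hρ : ρ ∈ Set.Icc (0 : ℝ) 1) :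
    (∃ S : Matrix (Fin 3) (Fin 3) ℝ, S.PosSemidef ∧ (∀ i, S i i = 1) ∧
      S 0 1 = -ρ ∧ S 0 2 = ρ ∧ S 1 2 = ρ) ↔ ρ ≤ 1 / 2 := by
  constructor
  · rintro ⟨S, hPSD, hdiag, h01, h02, h12⟩
    have hsym : ∀ i j, S j i = S i j := fun i j => by
      have := hPSD.1
      rw [Matrix.IsHermitian] at this
      conv_lhs => rw [← this]
      simp [Matrix.conjTranspose_apply]
    have h := hPSD.dotProduct_mulVec_nonneg ![1, 1, -1]
    simp only [dotProduct, Matrix.mulVec, Fin.sum_univ_three, dotProduct,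
      Matrix.cons_val_zero, Matrix.cons_val_one, Matrix.head_cons, Matrix.cons_val_two,
      Matrix.tail_cons, star_trivial, RCLike.re_to_real] at h
    rw [hdiag 0, hdiag 1, hdiag 2, h01, h02, h12, hsym 0 1, hsym 0 2, hsym 1 2,
      h01, h02, h12] at h
    linarith
  · intro h
    refine ⟨!![1, -ρ, ρ; -ρ, 1, ρ; ρ, ρ, 1], Matrix.PosSemidef.of_dotProduct_mulVec_nonneg ?_ ?_, ?_, by norm_num, by rfl,
      by rfl⟩
    · ext i j
      fin_cases i <;> fin_cases j <;> simp [Matrix.conjTranspose_apply]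
    · intro x
      simp [dotProduct, Matrix.mulVec, Fin.sum_univ_three]
      nlinarith [sq_nonneg (x 0 - x 1), sq_nonneg (x 0 + x 2), sq_nonneg (x 1 + x 2),
        sq_nonneg (x 0), sq_nonneg (x 1), sq_nonneg (x 2), hρ.1, h]
    · intro i
      fin_cases i <;> norm_num
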